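/- For every non-negative integer n, the n-th Bernoulli number of the second kind b_n satisfies b_n = (n+1) * C(2n, n)^{-1} * ∑_{j=0}^{n} ((-1)^{n+j} / (j+1)) * C(2n, n+j) * s(n+j, j), where s denotes the unsigned Stirling number of the first kind. -/

import Mathlib

/-- The unsigned `r`-Stirling number of the first kind. -/
def rStirling1 (r : ℕ) : ℕ → ℕ → ℕ
  | 0, k => if r = 0 ∧ k = 0 then 1 else 0
  | n + 1, k =>
    if n + 1 < r then 0
    else if n + 1 = r then (if k = r then 1 else 0)
    else (if k = 0 then 0 else rStirling1 r n (k - 1)) + n * rStirling1 r n k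

/-- The `r`-Stirling number of the second kind. -/
def rStirling2 (r : ℕ) : ℕ → ℕ → ℕ
  | 0, k => if r = 0 ∧ k = 0 then 1 else 0
  | n + 1, k =>
    if n + 1 < r then 0
    else if n + 1 = r then (if k = r then 1 else 0)
    else (if k = 0 then 0 else rStirling2 r n (k - 1)) + k * rStirling2 r n k

/-- The unsigned Stirling number of the first kind. -/
def stirling1 (n k : ℕ) : ℕ := rStirling1 0 n k

/-- The Bernoulli numbers of the second kind, defined by
`t / log (1+t) = ∑ b n * t^n / n!`, i.e. as `n!` times the coefficients of the
inverse of the power series `log(1+t)/t = ∑ (-1)^i t^i/(i+1)`. -/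
noncomputable def bernoulliSecond (n : ℕ) : ℚ :=
  (n.factorial : ℚ) *
    PowerSeries.coeff (R := ℚ) n (PowerSeries.mk fun i => (-1 : ℚ) ^ i / (i + 1))⁻¹

set_option maxRecDepth 4000

lemma stirling1_zero_zero : stirling1 0 0 = 1 := by simp [stirling1, rStirling1]

lemma stirling1_succ (n k : ℕ) :
    stirling1 (n+1) (k+1) = stirling1 n k + n * stirling1 n (k+1) := by
  simp [stirling1, rStirling1]

lemma stirling1_succ_zero (n : ℕ) : stirling1 (n+1) 0 = n * stirling1 n 0 := by
  simp [stirling1, rStirling1]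

lemma stirling1_zero_succ (k : ℕ) : stirling1 0 (k+1) = 0 := by
  simp [stirling1, rStirling1]

open PowerSeries

noncomputable def gps : ℚ⟦X⟧ := PowerSeries.mk fun i => (-1 : ℚ) ^ i / (i + 1)

noncomputable def Lps : ℚ⟦X⟧ := PowerSeries.X * gps

lemma deriv_Lps : d⁄dX ℚ Lps = PowerSeries.mk fun i => (-1 : ℚ) ^ i := by
  ext n
  rw [coeff_derivative]
  simp [Lps, gps, PowerSeries.coeff_succ_X_mul]
  field_simp

lemma one_add_X_mul_deriv_Lps : (1 + PowerSeries.X) * d⁄dX ℚ Lps = 1 := by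
  rw [deriv_Lps]
  ext n
  cases n with
  | zero => simp
  | succ m =>
    rw [add_mul, one_mul, map_add, PowerSeries.coeff_succ_X_mul]
    simp [pow_succ]

lemma stirling1_pos_zero (n : ℕ) : stirling1 (n+1) 0 = 0 := by
  induction n with
  | zero => simp [stirling1, rStirling1]
  | succ m ih => rw [stirling1_succ_zero, ih, mul_zero]

lemma key_rec (j : ℕ) (m : ℕ) :
    ((m : ℚ) + 1) * PowerSeries.coeff (R := ℚ) (m+1) (Lps ^ (j+1))
      + (m : ℚ) * PowerSeries.coeff (R := ℚ) m (Lps ^ (j+1))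
    = ((j : ℚ) + 1) * PowerSeries.coeff (R := ℚ) m (Lps ^ j) := by
  have h : (1 + PowerSeries.X) * d⁄dX ℚ (Lps ^ (j+1)) = ((j:ℚ)+1) • (Lps ^ j) := by
    rw [Derivation.leibniz_pow]
    simp only [Nat.add_sub_cancel, smul_eq_mul, nsmul_eq_mul]
    rw [show (1 + PowerSeries.X) * ((((j:ℕ)+1 : ℕ) : ℚ⟦X⟧) * (Lps^j * d⁄dX ℚ Lps))
        = (((j:ℕ)+1 : ℕ) : ℚ⟦X⟧) * (Lps^j * ((1 + PowerSeries.X) * d⁄dX ℚ Lps)) from by ring,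
      one_add_X_mul_deriv_Lps, mul_one, PowerSeries.smul_eq_C_mul, map_add, map_one,
      map_natCast]
    push_cast
    ring
  have h2 := congrArg (PowerSeries.coeff (R := ℚ) m) h
  rw [add_mul, one_mul, map_add, map_smul, smul_eq_mul] at h2
  cases m with
  | zero =>
    rw [PowerSeries.coeff_zero_X_mul, coeff_derivative] at h2
    push_cast at h2 ⊢
    linear_combination h2
  | succ k =>
    rw [PowerSeries.coeff_succ_X_mul, coeff_derivative, coeff_derivative] at h2
    push_cast at h2 ⊢
    linear_combination h2

lemma coeff_Lps_pow : ∀ j m : ℕ, (m.factorial : ℚ) * PowerSeries.coeff (R := ℚ) m (Lps ^ j)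
    = (-1 : ℚ) ^ (m + j) * stirling1 m j * j.factorial := by
  intro j
  induction j with
  | zero =>
    intro m
    cases m with
    | zero => simp [stirling1_zero_zero]
    | succ k => simp [PowerSeries.coeff_one, stirling1_pos_zero]
  | succ j ihj =>
    intro m
    induction m with
    | zero =>
      have h0 : PowerSeries.constantCoeff (R := ℚ) Lps = 0 := by
        simp [Lps]
      simp [PowerSeries.coeff_zero_eq_constantCoeff, map_pow, h0, stirling1_zero_succ]
    | succ m ihm =>
      have key := key_rec j m
      have hj := ihj m
      rw [stirling1_succ, Nat.factorial_succ, Nat.factorial_succ]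
      push_cast
      push_cast [Nat.factorial_succ] at hj ihm ⊢
      linear_combination (m.factorial : ℚ) * key + ((j:ℚ)+1) * hj - (m:ℚ) * ihm

lemma coeff_gps_pow (n j : ℕ) : (((n+j).factorial : ℚ)) * PowerSeries.coeff (R := ℚ) n (gps ^ j)
    = (-1 : ℚ) ^ n * stirling1 (n+j) j * j.factorial := by
  have h : PowerSeries.coeff (R := ℚ) (n + j) (Lps ^ j) = PowerSeries.coeff (R := ℚ) n (gps ^ j) := by
    rw [Lps, mul_pow, PowerSeries.coeff_X_pow_mul]
  have := coeff_Lps_pow j (n + j)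
  rw [h] at this
  rw [this, show n+j+j = n+2*j by ring, pow_add, pow_mul]
  norm_num

lemma coeff_inv_gps (n : ℕ) :
    PowerSeries.coeff (R := ℚ) n (gps⁻¹) =
      ∑ j ∈ Finset.range (n+1), (-1:ℚ)^j * ((n+1).choose (j+1) : ℚ)
        * PowerSeries.coeff (R := ℚ) n (gps ^ j) := by
  set S : ℚ⟦X⟧ := ∑ j ∈ Finset.range (n+1),
      ((-1:ℚ)^j * ((n+1).choose (j+1) : ℚ)) • gps ^ j with hS
  have hc : PowerSeries.constantCoeff (R := ℚ) gps = 1 := by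
    simp [gps, ← PowerSeries.coeff_zero_eq_constantCoeff]
  have hu : gps⁻¹ * gps = 1 := PowerSeries.inv_mul_cancel _ (by rw [hc]; exact one_ne_zero)
  have h1 : (1 - gps)^(n+1)
      = ∑ k ∈ Finset.range (n+2), (-gps)^k * (((n+1).choose k : ℕ) : ℚ⟦X⟧) := by
    rw [sub_eq_add_neg, add_comm, add_pow]
    simp
  have hgs : gps * S = 1 - (1 - gps)^(n+1) := by
    rw [h1, Finset.sum_range_succ']
    simp only [pow_zero, Nat.choose_zero_right, Nat.cast_one, one_mul, mul_one]
    rw [show ∀ T : ℚ⟦X⟧, 1 - (T + 1) = -T from fun T => by ring, ← Finset.sum_neg_distrib,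
      hS, Finset.mul_sum]
    refine Finset.sum_congr rfl fun j _ => ?_
    rw [PowerSeries.smul_eq_C_mul]
    simp only [map_mul, map_pow, map_natCast]
    rw [show PowerSeries.C (R := ℚ) (-1) = -1 from by simp]
    ring
  have hSeq : S = gps⁻¹ - gps⁻¹ * (1 - gps)^(n+1) := by
    have : S = gps⁻¹ * (gps * S) := by rw [← mul_assoc, hu, one_mul]
    rw [this, hgs, mul_sub, mul_one]
  have hdvd : (PowerSeries.X : ℚ⟦X⟧)^(n+1) ∣ gps⁻¹ * (1 - gps)^(n+1) := by
    refine Dvd.dvd.mul_left ?_ _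
    exact pow_dvd_pow_of_dvd (PowerSeries.X_dvd_iff.mpr (by simp [hc])) (n+1)
  have hz : PowerSeries.coeff (R := ℚ) n (gps⁻¹ * (1 - gps)^(n+1)) = 0 :=
    PowerSeries.X_pow_dvd_iff.mp hdvd n (Nat.lt_succ_self n)
  have hcoeff := congrArg (PowerSeries.coeff (R := ℚ) n) hSeq
  rw [map_sub, hz, sub_zero, hS, map_sum] at hcoeff
  rw [← hcoeff]
  refine Finset.sum_congr rfl fun j _ => ?_
  rw [LinearMap.map_smul, smul_eq_mul]

theorem bernoulliSecond_eq_sum_stirling1' (n : ℕ) :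
    (n.factorial : ℚ) * PowerSeries.coeff (R := ℚ) n gps⁻¹ = ((n : ℚ) + 1) * (((2 * n).choose n : ℚ))⁻¹ *
      ∑ j ∈ Finset.range (n + 1),
        ((-1 : ℚ) ^ (n + j) / (j + 1)) * ((2 * n).choose (n + j)) *
          stirling1 (n + j) j := by
  rw [coeff_inv_gps, Finset.mul_sum, Finset.mul_sum]
  refine Finset.sum_congr rfl fun j hj => ?_
  have hj' : j ≤ n := Nat.lt_succ_iff.mp (Finset.mem_range.mp hj)
  have hfa : ∀ m : ℕ, ((m.factorial : ℚ)) ≠ 0 := fun m => Nat.cast_ne_zero.mpr m.factorial_ne_zero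
  have e0 : PowerSeries.coeff (R := ℚ) n (gps ^ j)
      = (-1 : ℚ) ^ n * stirling1 (n+j) j * j.factorial / (n+j).factorial := by
    have := coeff_gps_pow n j
    field_simp
    linarith [this]
  have h1 := Nat.choose_mul_factorial_mul_factorial (show j+1 ≤ n+1 by omega)
  have h2 := Nat.choose_mul_factorial_mul_factorial (show n ≤ 2*n by omega)
  have h3 := Nat.choose_mul_factorial_mul_factorial (show n+j ≤ 2*n by omega)
  rw [show n+1-(j+1) = n-j by omega] at h1
  rw [show 2*n-n = n by omega] at h2
  rw [show 2*n-(n+j) = n-j by omega] at h3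
  have e1 : (((n+1).choose (j+1) : ℕ) : ℚ)
      = (n+1).factorial / ((j+1).factorial * (n-j).factorial) := by
    rw [mul_assoc] at h1
    field_simp
    have hc := congrArg (Nat.cast (R := ℚ)) h1
    push_cast at hc
    linear_combination hc
  have e2 : (((2*n).choose n : ℕ) : ℚ) = (2*n).factorial / (n.factorial * n.factorial) := by
    rw [mul_assoc] at h2
    field_simp
    have hc := congrArg (Nat.cast (R := ℚ)) h2
    push_cast at hc
    linear_combination hc
  have e3 : (((2*n).choose (n+j) : ℕ) : ℚ)
      = (2*n).factorial / ((n+j).factorial * (n-j).factorial) := by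
    rw [mul_assoc] at h3
    field_simp
    have hc := congrArg (Nat.cast (R := ℚ)) h3
    push_cast at hc
    linear_combination hc
  rw [e0, e1, e2, e3]
  have hj1 : ((j : ℚ) + 1) ≠ 0 := by positivity
  rw [Nat.factorial_succ j, Nat.factorial_succ n]
  push_cast
  field_simp
  ring

theorem bernoulliSecond_eq_sum_stirling1 (n : ℕ) :
    bernoulliSecond n = ((n : ℚ) + 1) * (((2 * n).choose n : ℚ))⁻¹ *
      ∑ j ∈ Finset.range (n + 1),
        ((-1 : ℚ) ^ (n + j) / (j + 1)) * ((2 * n).choose (n + j)) *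
          stirling1 (n + j) j := by
  rw [show bernoulliSecond n = (n.factorial : ℚ) * PowerSeries.coeff (R := ℚ) n gps⁻¹ from rfl]
  exact bernoulliSecond_eq_sum_stirling1' n
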